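/- Let p be an odd prime and let G be a finite non-abelian p-group such that Aut_l(G) = Inn(G). Then exp(G/Z(G)) = exp(L(G)). -/

import Mathlib

/-- The absolute centre `L(G)`: elements fixed by every automorphism of `G`. -/
def absoluteCenter (G : Type*) [Group G] : Subgroup G where
  carrier := {g | ∀ α : MulAut G, α g = g}
  one_mem' := fun α => map_one α
  mul_mem' := fun {a b} ha hb α => by rw [map_mul, ha α, hb α]
  inv_mem' := fun {a} ha α => by rw [map_inv, ha α]

/-- The group `Aut_l(G)` of absolute central automorphisms of `G`. -/
def absCentralAut (G : Type*) [Group G] : Subgroup (MulAut G) where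
  carrier := {α | ∀ g : G, g⁻¹ * α g ∈ absoluteCenter G}
  one_mem' := fun g => by simpa using (absoluteCenter G).one_mem
  mul_mem' := fun {α β} hα hβ g => by
    have h : g⁻¹ * (α * β) g = (g⁻¹ * β g) * ((β g)⁻¹ * α (β g)) := by
      simp [MulAut.mul_apply, mul_assoc]
    rw [h]; exact mul_mem (hβ g) (hα (β g))
  inv_mem' := fun {α} hα g => by
    have h : g⁻¹ * α⁻¹ g = ((α⁻¹ g)⁻¹ * α (α⁻¹ g))⁻¹ := by
      simp [MulAut.inv_def, mul_assoc]
    rw [h]; exact inv_mem (hα (α⁻¹ g))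

/-- Let `p` be an odd prime and `G` a finite non-abelian `p`-group with
`Aut_l(G) = Inn(G)`.  Then `exp(G/Z(G)) = exp(L(G))`. -/
theorem exponent_quotient_center_eq {p : ℕ} [Fact p.Prime] (hodd : Odd p)
    (G : Type*) [Group G] [Finite G]
    (hG : IsPGroup p G) (hna : ∃ a b : G, a * b ≠ b * a)
    (h : absCentralAut G = (MulAut.conj : G →* MulAut G).range) :
    Monoid.exponent (G ⧸ Subgroup.center G) = Monoid.exponent (absoluteCenter G) := by
  classical
  set L := absoluteCenter G with hLdef
  set Z := Subgroup.center G with hZdef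
  set e := Monoid.exponent (G ⧸ Z) with hedef
  -- L is central
  have hcen : ∀ c ∈ L, ∀ b : G, b * c = c * b := by
    intro c hc b
    have := hc (MulAut.conj b)
    simp only [MulAut.conj_apply] at this
    calc b * c = (b * c * b⁻¹) * b := by group
    _ = c * b := by rw [this]
  -- inner automorphisms are absolute central
  have hk : ∀ g a : G, g⁻¹ * (a * g * a⁻¹) ∈ L := by
    intro g a
    have : MulAut.conj a ∈ absCentralAut G := by
      rw [h]; exact ⟨a, rfl⟩
    simpa using this g
  -- conjugation formula
  have hconj : ∀ (a g : G) (n : ℕ),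
      a * g ^ n * a⁻¹ = g ^ n * (g⁻¹ * (a * g * a⁻¹)) ^ n := by
    intro a g n
    have hc : Commute g (g⁻¹ * (a * g * a⁻¹)) := hcen _ (hk g a) g
    have h1 : a * g ^ n * a⁻¹ = (a * g * a⁻¹) ^ n := by
      have := map_pow (MulAut.conj a) g n
      simpa [MulAut.conj_apply] using this
    have h2 : a * g * a⁻¹ = g * (g⁻¹ * (a * g * a⁻¹)) := by group
    rw [h1, h2, hc.mul_pow, inv_mul_cancel_left]
  -- commutator-type elements have order dividing e
  have hke : ∀ g a : G, (g⁻¹ * (a * g * a⁻¹)) ^ e = 1 := by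
    intro g a
    have hz : g ^ e ∈ Z := by
      have : ((g : G ⧸ Z)) ^ e = 1 := Monoid.pow_exponent_eq_one _
      rwa [← QuotientGroup.mk_pow, QuotientGroup.eq_one_iff] at this
    have h1 : a * g ^ e * a⁻¹ = g ^ e := by
      have := (Subgroup.mem_center_iff.mp hz) a
      calc a * g ^ e * a⁻¹ = (a * g ^ e) * a⁻¹ := by group
      _ = (g ^ e * a) * a⁻¹ := by rw [this]
      _ = g ^ e := by group
    have h2 := hconj a g e
    rw [h1] at h2
    exact (mul_eq_left.mp h2.symm)
  -- direction 1 : e ∣ exponent L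
  have dir1 : e ∣ Monoid.exponent L := by
    apply Monoid.exponent_dvd_of_forall_pow_eq_one
    intro x
    induction x using QuotientGroup.induction_on with
    | H g =>
    rw [← QuotientGroup.mk_pow, QuotientGroup.eq_one_iff]
    apply Subgroup.mem_center_iff.mpr
    intro b
    have h1 := hconj b g (Monoid.exponent L)
    rw [Subgroup.pow_exponent_eq_one (hk g b), mul_one] at h1
    calc b * g ^ Monoid.exponent L = (b * g ^ Monoid.exponent L * b⁻¹) * b := by group
    _ = g ^ Monoid.exponent L * b := by rw [h1]
  -- direction 2 : exponent L ∣ e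
  have dir2 : Monoid.exponent L ∣ e := by
    by_contra hnd
    obtain ⟨lsub, hlsub⟩ : ∃ lsub : L, lsub ^ e ≠ 1 := by
      by_contra hall
      push_neg at hall
      exact hnd (Monoid.exponent_dvd_of_forall_pow_eq_one hall)
    set l : G := (lsub : G) with hldef
    have hlL : l ∈ L := lsub.2
    have hle : l ^ e ≠ 1 := by
      intro hh
      apply hlsub
      ext
      simpa using hh
    have hp : p.Prime := Fact.out
    obtain ⟨r, hre⟩ : ∃ r, e = p ^ r := by
      have hA : IsPGroup p (G ⧸ Z) := hG.to_quotient Z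
      obtain ⟨n, hn⟩ := IsPGroup.iff_card.mp hA
      have hd : e ∣ p ^ n := by
        rw [← hn]
        haveI : Fintype (G ⧸ Z) := Fintype.ofFinite _
        rw [Nat.card_eq_fintype_card]
        exact Group.exponent_dvd_card
      obtain ⟨r, -, hr⟩ := (Nat.dvd_prime_pow hp).mp hd
      exact ⟨r, hr⟩
    have he1 : e ≠ 1 := by
      intro h1
      obtain ⟨a, b, hab⟩ := hna
      apply hab
      have ha : a ∈ Z := by
        rw [← QuotientGroup.eq_one_iff]
        have := Monoid.pow_exponent_eq_one (QuotientGroup.mk a : G ⧸ Z)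
        rwa [← hedef, h1, pow_one] at this
      exact ((Subgroup.mem_center_iff.mp ha) b).symm
    have hr1 : 1 ≤ r := by
      rcases Nat.eq_zero_or_pos r with h0 | h1
      · exact absurd (by rw [hre, h0, pow_zero]) he1
      · exact h1
    have hpe : p ∣ e := by
      rw [hre]
      exact dvd_pow_self p (by omega)
    have heodd : Odd e := by
      rw [hre]; exact hodd.pow
    -- the generic multiplication formula
    have hpowmul : ∀ g b : G, (g * b) ^ (e + 1) = g ^ (e + 1) * b ^ (e + 1) := by
      intro g b
      set k := g⁻¹ * (b * g * b⁻¹) with hkdef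
      have hkL : k ∈ L := hk g b
      have hkc : ∀ (m : ℕ) (x : G), x * k ^ m = k ^ m * x := by
        intro m x
        exact ((Commute.symm (hcen _ hkL x)).pow_left m).symm.eq
      have hbg : b * g = g * k * b := by
        have h2 : b * g * b⁻¹ = g * k := by rw [hkdef]; group
        calc b * g = (b * g * b⁻¹) * b := by group
        _ = g * k * b := by rw [h2]
      have hbng : ∀ n : ℕ, b ^ n * g = g * k ^ n * b ^ n := by
        intro n
        induction n with
        | zero => simp
        | succ n ih =>
          calc b ^ (n + 1) * g = b ^ n * (b * g) := by rw [pow_succ, mul_assoc]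
          _ = b ^ n * (g * k * b) := by rw [hbg]
          _ = (b ^ n * g) * (k * b) := by simp only [mul_assoc]
          _ = (g * k ^ n * b ^ n) * (k * b) := by rw [ih]
          _ = g * (k ^ n * (b ^ n * k * b)) := by simp only [mul_assoc]
          _ = g * (k ^ n * (k * (b ^ n * b))) := by rw [hcen _ hkL (b ^ n)]; simp only [mul_assoc]
          _ = g * k ^ (n + 1) * b ^ (n + 1) := by
              rw [pow_succ k, pow_succ b]; simp only [mul_assoc]
      have hmain : ∀ n : ℕ,
          (g * b) ^ n = g ^ n * b ^ n * k ^ (∑ i ∈ Finset.range n, i) := by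
        intro n
        induction n with
        | zero => simp
        | succ n ih =>
          calc (g * b) ^ (n + 1) = g ^ n * b ^ n * k ^ (∑ i ∈ Finset.range n, i) * (g * b) := by
                rw [pow_succ, ih]
          _ = g ^ n * (b ^ n * ((g * b) * k ^ (∑ i ∈ Finset.range n, i))) := by
                simp only [mul_assoc]
                rw [← hkc (∑ i ∈ Finset.range n, i) (g * b)]
                simp only [mul_assoc]
          _ = g ^ n * ((b ^ n * g) * (b * k ^ (∑ i ∈ Finset.range n, i))) := by
                simp only [mul_assoc]
          _ = g ^ n * ((g * k ^ n * b ^ n) * (b * k ^ (∑ i ∈ Finset.range n, i))) := by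
                rw [hbng n]
          _ = g ^ n * (g * ((b ^ n * (b * k ^ (∑ i ∈ Finset.range n, i))) * k ^ n)) := by
                simp only [mul_assoc]
                rw [← hkc n (b ^ n * (b * k ^ (∑ i ∈ Finset.range n, i)))]
                simp only [mul_assoc]
          _ = g ^ (n + 1) * b ^ (n + 1) * k ^ (∑ i ∈ Finset.range (n + 1), i) := by
                rw [Finset.sum_range_succ, pow_succ, pow_succ b, pow_add]
                simp only [mul_assoc]
      have hsum : ∃ c : ℕ, (∑ i ∈ Finset.range (e + 1), i) = c * e := by
        obtain ⟨c, hcc⟩ := heodd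
        refine ⟨c + 1, ?_⟩
        have h2 : (∑ i ∈ Finset.range (e + 1), i) * 2 = (e + 1) * e := by
          rw [Finset.sum_range_id_mul_two]
          simp
        have h3 : (e + 1) * e = ((c + 1) * e) * 2 := by
          have h4 : e + 1 = 2 * (c + 1) := by omega
          rw [h4]; ring
        exact Nat.eq_of_mul_eq_mul_right (by norm_num : (0:ℕ) < 2) (by rw [h2, h3])
      obtain ⟨c, hcc⟩ := hsum
      have hke2 : k ^ e = 1 := hke g b
      rw [hmain (e + 1), hcc, mul_comm c e, pow_mul, hke2, one_pow, mul_one]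
    by_cases hc : ∀ g : G, g ^ e ∈ L
    · -- Case 2: the power map g ↦ g^(e+1) is an absolute central automorphism
      let φ : G →* G :=
        { toFun := fun g => g ^ (e + 1)
          map_one' := one_pow _
          map_mul' := hpowmul }
      have hinj : Function.Injective φ := by
        rw [injective_iff_map_eq_one]
        intro g hg
        have hg' : g ^ (e + 1) = 1 := hg
        obtain ⟨kk, hkk⟩ := hG g
        have h1 : orderOf g ∣ e + 1 := orderOf_dvd_of_pow_eq_one hg'
        have h2 : orderOf g ∣ p ^ kk := orderOf_dvd_of_pow_eq_one hkk
        obtain ⟨j, -, hj⟩ := (Nat.dvd_prime_pow hp).mp h2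
        rcases Nat.eq_zero_or_pos j with h0 | hj1
        · rw [h0, pow_zero] at hj
          exact orderOf_eq_one_iff.mp hj
        · exfalso
          have hpd : p ∣ e + 1 := dvd_trans (by rw [hj]; exact dvd_pow_self p (by omega)) h1
          have hd1 : p ∣ 1 := by
            have := Nat.dvd_sub hpd hpe
            simpa using this
          exact Nat.Prime.one_lt hp |>.ne' (Nat.dvd_one.mp hd1)
      let β : MulAut G := MulEquiv.ofBijective φ (Finite.injective_iff_bijective.mp hinj)
      have hβmem : β ∈ absCentralAut G := by
        intro g
        have hβg : β g = g ^ (e + 1) := rfl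
        rw [hβg]
        have : g⁻¹ * g ^ (e + 1) = g ^ e := by rw [pow_succ']; group
        rw [this]
        exact hc g
      rw [h] at hβmem
      obtain ⟨a, ha⟩ := hβmem
      have hal : a * l * a⁻¹ = l := by
        rw [hcen l hlL a]; group
      have hβl : β l = l ^ (e + 1) := rfl
      have : l ^ (e + 1) = l := by
        rw [← hβl, ← ha]
        simpa [MulAut.conj_apply] using hal
      apply hle
      have := this
      rw [pow_succ] at this
      exact mul_right_cancel (by rw [this, one_mul])
    · -- Case 1
      push_neg at hc
      obtain ⟨g₀, hg₀⟩ := hc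
      haveI hLnormal : L.Normal := ⟨by
        intro x hx g
        have hgx : g * x * g⁻¹ = x := by rw [hcen x hx g]; group
        rw [hgx]; exact hx⟩
      letI : CommGroup ↥L :=
        { (inferInstance : Group ↥L) with
          mul_comm := fun x y => Subtype.ext (hcen (y : G) y.2 (x : G)) }
      letI : CommGroup (G ⧸ L) :=
        { (inferInstance : Group (G ⧸ L)) with
          mul_comm := by
            intro x y
            induction x using QuotientGroup.induction_on with | H a =>
            induction y using QuotientGroup.induction_on with | H b =>
            rw [← QuotientGroup.mk_mul, ← QuotientGroup.mk_mul, QuotientGroup.eq]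
            have h2 : (a * b)⁻¹ * (b * a) = b⁻¹ * (a⁻¹ * b * a⁻¹⁻¹) := by group
            rw [h2]
            exact hk b a⁻¹ }
      obtain ⟨ι, fι, q, hq, ee, ⟨E⟩⟩ :=
        AddCommGroup.equiv_directSum_zmod_of_finite (Additive (G ⧸ L))
      have hpA : IsPGroup p (G ⧸ L) := hG.to_quotient L
      set x := E (Additive.ofMul (QuotientGroup.mk g₀ : G ⧸ L)) with hxdef
      have hx : ¬ ((p ^ r) • x = 0) := by
        intro h0
        apply hg₀
        rw [hre]
        rw [← map_nsmul, ← ofMul_pow] at h0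
        have h1 : Additive.ofMul ((QuotientGroup.mk g₀ : G ⧸ L) ^ p ^ r) = 0 := by
          have h3 := congrArg E.symm h0
          simpa using h3
        have h2 : (QuotientGroup.mk g₀ : G ⧸ L) ^ p ^ r = 1 := ofMul_eq_zero.mp h1
        rw [← QuotientGroup.mk_pow] at h2
        exact (QuotientGroup.eq_one_iff _).mp h2
      -- evaluation maps
      let ev : ∀ j : ι, (DirectSum ι fun i => ZMod (q i ^ ee i)) →+ ZMod (q j ^ ee j) := fun j =>
        AddMonoidHom.mk' (fun y => y j) (fun y z => DirectSum.add_apply y z j)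
      obtain ⟨j, hj⟩ : ∃ j : ι, ¬ ((p ^ r) • x j = 0) := by
        by_contra hall
        push_neg at hall
        apply hx
        refine DFinsupp.ext fun j => ?_
        have : ev j ((p ^ r) • x) = (p ^ r) • x j := by rw [map_nsmul]; rfl
        rw [show ((p ^ r) • x) j = ev j ((p ^ r) • x) from rfl, this, hall j]
        rfl
      -- the order of x j is a large power of p, so q j = p and ee j > r
      have hxK : ∃ K, (p ^ K) • x = 0 := by
        obtain ⟨K, hK⟩ := hpA (QuotientGroup.mk g₀ : G ⧸ L)
        refine ⟨K, ?_⟩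
        rw [hxdef, ← map_nsmul, ← ofMul_pow, hK]
        simp
      obtain ⟨K, hK⟩ := hxK
      have hordj : addOrderOf (x j) ∣ p ^ K := by
        apply addOrderOf_dvd_of_nsmul_eq_zero
        have : ev j ((p ^ K) • x) = (p ^ K) • x j := by rw [map_nsmul]; rfl
        rw [← this, hK, map_zero]
      obtain ⟨t, -, ht⟩ := (Nat.dvd_prime_pow hp).mp hordj
      have hchar : ∀ (jj : ι) (c : ZMod (q jj ^ ee jj)), (q jj ^ ee jj) • c = 0 := by
        intro jj c
        rw [nsmul_eq_mul, ZMod.natCast_self, zero_mul]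
      have htr : r < t := by
        by_contra hh
        push_neg at hh
        apply hj
        apply addOrderOf_dvd_iff_nsmul_eq_zero.mp
        rw [ht]
        exact pow_dvd_pow p hh
      have hjq : q j = p := by
        have hdvd : addOrderOf (x j) ∣ q j ^ ee j :=
          addOrderOf_dvd_of_nsmul_eq_zero (hchar j (x j))
        have hpq : p ∣ q j := by
          apply (Nat.Prime.dvd_of_dvd_pow hp)
          calc p ∣ p ^ t := dvd_pow_self p (by omega)
          _ = addOrderOf (x j) := ht.symm
          _ ∣ q j ^ ee j := hdvd
        exact ((Nat.prime_dvd_prime_iff_eq hp (hq j)).mp hpq).symm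
      have heej : r < ee j := by
        have hdvd : addOrderOf (x j) ∣ q j ^ ee j :=
          addOrderOf_dvd_of_nsmul_eq_zero (hchar j (x j))
        rw [ht, hjq] at hdvd
        have := (Nat.pow_dvd_pow_iff_le_right hp.one_lt).mp hdvd
        omega
      -- pick the index with the maximal exponent
      obtain ⟨i₀, -, hmax⟩ := Finset.exists_max_image Finset.univ ee ⟨j, Finset.mem_univ j⟩
      set a := ee i₀ with hadef
      have har : r < a := lt_of_lt_of_le heej (hmax j (Finset.mem_univ j))
      -- q i₀ = p
      set u := DirectSum.of (fun i => ZMod (q i ^ ee i)) i₀ (1 : ZMod (q i₀ ^ ee i₀)) with hudef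
      have hq0 : q i₀ = p := by
        obtain ⟨K2, hK2⟩ := hpA (Additive.toMul (E.symm u))
        have h0 : (p ^ K2) • u = 0 := by
          have h1 : (p ^ K2) • (E.symm u) = 0 := by
            have h2 : Additive.ofMul ((Additive.toMul (E.symm u)) ^ p ^ K2) = 0 :=
              ofMul_eq_zero.mpr hK2
            rw [ofMul_pow] at h2
            simpa using h2
          have h3 : E ((p ^ K2) • (E.symm u)) = 0 := by rw [h1, map_zero]
          rwa [map_nsmul, AddEquiv.apply_symm_apply] at h3
        have h4 : (p ^ K2) • (1 : ZMod (q i₀ ^ ee i₀)) = 0 := by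
          have h5 : ev i₀ ((p ^ K2) • u) = (p ^ K2) • (u i₀) := by rw [map_nsmul]; rfl
          have h6 : u i₀ = (1 : ZMod (q i₀ ^ ee i₀)) := DirectSum.of_eq_same i₀ 1
          rw [← h6, ← h5, h0, map_zero]
        have h7 : q i₀ ^ ee i₀ ∣ p ^ K2 := by
          have := addOrderOf_dvd_of_nsmul_eq_zero h4
          rwa [ZMod.addOrderOf_one] at this
        have h8 : q i₀ ∣ p ^ K2 := dvd_trans (dvd_pow_self (q i₀) (by omega)) h7
        exact (Nat.prime_dvd_prime_iff_eq (hq i₀) hp).mp ((hq i₀).dvd_of_dvd_pow h8)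
      -- the order of l is p ^ s with r < s
      obtain ⟨s, hs⟩ : ∃ s, orderOf l = p ^ s := by
        obtain ⟨K3, hK3⟩ := hG l
        obtain ⟨s, -, hs⟩ := (Nat.dvd_prime_pow hp).mp (orderOf_dvd_of_pow_eq_one hK3)
        exact ⟨s, hs⟩
      have hsr : r < s := by
        by_contra hh
        push_neg at hh
        apply hle
        rw [hre]
        apply orderOf_dvd_iff_pow_eq_one.mp
        rw [hs]
        exact pow_dvd_pow p hh
      set m := min a s with hmdef
      have hmr : r < m := lt_min har hsr
      have hma : m ≤ a := min_le_left a s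
      have hms : m ≤ s := min_le_right a s
      -- the element l2 of L
      set l2 : ↥L := (⟨l, hlL⟩ : ↥L) ^ (p ^ (s - m)) with hl2def
      have hl2coe : ((l2 : ↥L) : G) = l ^ (p ^ (s - m)) := by
        rw [hl2def]
        rfl
      have hl2pow : ∀ N : ℕ, ((l2 ^ N : ↥L) : G) = l ^ (p ^ (s - m) * N) := by
        intro N
        rw [pow_mul, ← hl2coe, ← SubmonoidClass.coe_pow]
      have hl2a : l2 ^ (q i₀ ^ ee i₀) = 1 := by
        apply Subtype.ext
        rw [hl2pow]
        apply orderOf_dvd_iff_pow_eq_one.mp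
        rw [hs, hq0, ← hadef, ← pow_add]
        apply pow_dvd_pow p
        omega
      have hl2e : ¬ ((l2 : G) ^ e = 1) := by
        rw [hre, hl2coe, ← pow_mul, ← pow_add]
        intro hh
        have := orderOf_dvd_of_pow_eq_one hh
        rw [hs] at this
        have := (Nat.pow_dvd_pow_iff_le_right hp.one_lt).mp this
        omega
      -- the homomorphism ψ from the i₀-component into L
      have hψ0 : (zmultiplesHom (Additive ↥L) (Additive.ofMul l2)) ((q i₀ ^ ee i₀ : ℕ) : ℤ) = 0 := by
        have h1 : ((q i₀ ^ ee i₀ : ℕ) : ℤ) • (Additive.ofMul l2) = Additive.ofMul (l2 ^ (q i₀ ^ ee i₀ : ℕ)) := by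
          rw [← ofMul_zpow, zpow_natCast]
        rw [zmultiplesHom_apply, h1, hl2a]
        rfl
      set ψ : ZMod (q i₀ ^ ee i₀) →+ Additive ↥L :=
        ZMod.lift (q i₀ ^ ee i₀) ⟨zmultiplesHom (Additive ↥L) (Additive.ofMul l2), hψ0⟩ with hψdef
      have hψ1 : ψ (1 : ZMod (q i₀ ^ ee i₀)) = Additive.ofMul l2 := by
        have h1 : (1 : ZMod (q i₀ ^ ee i₀)) = ((1 : ℤ) : ZMod (q i₀ ^ ee i₀)) := by
          rw [Int.cast_one]
        rw [hψdef, h1, ZMod.lift_coe, zmultiplesHom_apply, one_zsmul]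
      -- assemble the homomorphism into L
      set φfam : ∀ i : ι, ZMod (q i ^ ee i) →+ Additive ↥L :=
        Function.update (fun i => (0 : ZMod (q i ^ ee i) →+ Additive ↥L)) i₀ ψ with hφfamdef
      set F0 : (DirectSum ι fun i => ZMod (q i ^ ee i)) →+ Additive ↥L :=
        DirectSum.toAddMonoid φfam with hF0def
      set ff : G → ↥L := fun g =>
        Additive.toMul (F0 (E (Additive.ofMul (QuotientGroup.mk g : G ⧸ L)))) with hffdef
      have ffmul : ∀ g1 g2 : G, ff (g1 * g2) = ff g1 * ff g2 := by
        intro g1 g2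
        rw [hffdef]
        simp only [QuotientGroup.mk_mul, ofMul_mul, map_add, toMul_add]
      have ffL : ∀ g : G, g ∈ L → ff g = 1 := by
        intro g hg
        rw [hffdef]
        simp only
        rw [(QuotientGroup.eq_one_iff g).mpr hg]
        simp
      have ffval : ∃ g1 : G, ff g1 = l2 := by
        obtain ⟨g1, hg1⟩ := QuotientGroup.mk_surjective (Additive.toMul (E.symm u) : G ⧸ L)
        refine ⟨g1, ?_⟩
        rw [hffdef]
        simp only
        rw [hg1]
        have h1 : Additive.ofMul (Additive.toMul (E.symm u)) = E.symm u := rfl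
        rw [h1, AddEquiv.apply_symm_apply, hudef, DirectSum.toAddMonoid_of]
        have h2 : φfam i₀ = ψ := by
          rw [hφfamdef]
          simp
        rw [h2, hψ1]
        rfl
      -- the automorphism g ↦ g * ff g
      let φ2 : G →* G :=
        { toFun := fun g => g * ((ff g : ↥L) : G)
          map_one' := by
            show (1 : G) * ((ff 1 : ↥L) : G) = 1
            rw [ffL 1 (one_mem L)]
            simp
          map_mul' := by
            intro g1 g2
            show (g1 * g2) * ((ff (g1 * g2) : ↥L) : G) =
              (g1 * ((ff g1 : ↥L) : G)) * (g2 * ((ff g2 : ↥L) : G))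
            rw [ffmul]
            have hcoemul : ((ff g1 * ff g2 : ↥L) : G) = (ff g1 : G) * (ff g2 : G) := rfl
            rw [hcoemul]
            have h1 : g2 * ((ff g1 : ↥L) : G) = ((ff g1 : ↥L) : G) * g2 := hcen _ (ff g1).2 g2
            calc g1 * g2 * ((ff g1 : G) * (ff g2 : G))
                = g1 * (g2 * (ff g1 : G)) * (ff g2 : G) := by simp only [mul_assoc]
            _ = g1 * ((ff g1 : G) * g2) * (ff g2 : G) := by rw [h1]
            _ = g1 * (ff g1 : G) * (g2 * (ff g2 : G)) := by simp only [mul_assoc] }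
      have hinj2 : Function.Injective φ2 := by
        rw [injective_iff_map_eq_one]
        intro g hg
        have hg' : g * ((ff g : ↥L) : G) = 1 := hg
        have hgL : g ∈ L := by
          have h1 : g = ((ff g : ↥L) : G)⁻¹ := eq_inv_of_mul_eq_one_left hg'
          rw [h1]
          exact inv_mem (ff g).2
        rw [ffL g hgL] at hg'
        simpa using hg'
      let β2 : MulAut G := MulEquiv.ofBijective φ2 (Finite.injective_iff_bijective.mp hinj2)
      have hβ2mem : β2 ∈ absCentralAut G := by
        intro g
        have hβg : β2 g = g * ((ff g : ↥L) : G) := rfl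
        rw [hβg, inv_mul_cancel_left]
        exact (ff g).2
      rw [h] at hβ2mem
      obtain ⟨a2, ha2⟩ := hβ2mem
      obtain ⟨g1, hg1⟩ := ffval
      have hfin : ((ff g1 : ↥L) : G) = g1⁻¹ * (a2 * g1 * a2⁻¹) := by
        have h1 : MulAut.conj a2 g1 = β2 g1 := by rw [ha2]
        have hβg1 : β2 g1 = g1 * ((ff g1 : ↥L) : G) := rfl
        rw [hβg1, MulAut.conj_apply] at h1
        rw [h1]
        group
      apply hl2e
      rw [← hg1, hfin]
      exact hke g1 a2
  exact Nat.dvd_antisymm dir1 dir2
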